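/- Let K{X} be the free magma algebra over a field of characteristic 0, Δ the co-addition, and for monomials s define Δ_s by Δ(f) = Σ_s Δ_s(f) ⊗ s. For any fixed variable x_i ∈ X and any n ≥ 1, the sum of Δ_s over all monomials s of degree n in the single variable x_i equals (1/n!)·D_i^n, where D_i is the derivation with D_i(x_i) = 1, D_i(x_j) = 0 (j≠i). -/

import Mathlib

open scoped TensorProduct

noncomputable section

/-- The free unital magma algebra `K{X}`. -/
abbrev FreeMagmaAlgebra (K X : Type*) [Field K] : Type _ :=
  MonoidAlgebra K (WithOne (FreeMagma X))

/-- The generator of `K{X}` corresponding to a variable `x ∈ X`. -/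
def FreeMagmaAlgebra.gen (K : Type*) {X : Type*} [Field K] (x : X) : FreeMagmaAlgebra K X :=
  MonoidAlgebra.of K (WithOne (FreeMagma X)) (FreeMagma.of x)

/-- `Δ_s`: the coefficient of the monomial `s` in the second tensor slot of `Δ(f)`,
so that `Δ(f) = Σ_s Δ_s(f) ⊗ s`. -/
def DeltaS {K X : Type*} [Field K]
    (Δ : FreeMagmaAlgebra K X →ₗ[K] FreeMagmaAlgebra K X ⊗[K] FreeMagmaAlgebra K X)
    (s : WithOne (FreeMagma X)) : FreeMagmaAlgebra K X →ₗ[K] FreeMagmaAlgebra K X :=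
  (TensorProduct.rid K (FreeMagmaAlgebra K X)).toLinearMap ∘ₗ
    TensorProduct.map LinearMap.id
      (Finsupp.lapply s ∘ₗ (MonoidAlgebra.coeffLinearEquiv K).toLinearMap) ∘ₗ Δ

namespace Aux12

/-! ### Combinatorics of `FreeMagma` monomials of a fixed length -/

/-- Finset of elements of `FreeMagma Unit` of length `n`. -/
def T : ℕ → Finset (FreeMagma Unit)
  | 0 => ∅
  | 1 => {FreeMagma.of ()}
  | (n+2) => (Finset.range (n+1)).attach.biUnion fun p =>
      Finset.image (fun q : FreeMagma Unit × FreeMagma Unit => q.1 * q.2)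
        ((T (p.1+1)) ×ˢ (T (n+1-p.1)))
  termination_by n => n
  decreasing_by
  all_goals
    have := p.2
    simp only [Finset.mem_range] at this
    omega

@[simp] lemma length_mul {α : Type*} (a b : FreeMagma α) :
    (a * b).length = a.length + b.length := rfl

lemma mul_ne_of {α : Type*} (a b : FreeMagma α) (x : α) : a * b ≠ FreeMagma.of x :=
  fun h => by injection h

@[simp] lemma mul_inj {α : Type*} (a b c d : FreeMagma α) :
    a * b = c * d ↔ a = c ∧ b = d := by
  constructor
  · intro h; injection h with h1 h2; exact ⟨h1, h2⟩
  · rintro ⟨rfl, rfl⟩; rfl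

lemma T_length : ∀ n, ∀ s ∈ T n, s.length = n := by
  intro n
  induction n using Nat.strong_induction_on with
  | _ n ih =>
    match n with
    | 0 => simp [T]
    | 1 => intro s hs; simp [T] at hs; subst hs; rfl
    | (n+2) =>
      intro s hs
      simp only [T, Finset.mem_biUnion, Finset.mem_attach, Finset.mem_image, Finset.mem_product,
        true_and] at hs
      obtain ⟨⟨p, hp⟩, ⟨a, b⟩, ⟨ha, hb⟩, rfl⟩ := hs
      simp only [Finset.mem_range] at hp
      have h1 := ih (p+1) (by omega) a ha
      have h2 := ih (n+1-p) (by omega) b hb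
      simp [h1, h2]; omega

lemma mem_T_of_length : ∀ s : FreeMagma Unit, s ∈ T s.length := by
  intro s
  induction s with
  | ih1 x => cases x; simp [T, FreeMagma.length]
  | ih2 a b iha ihb =>
    have hla := a.length_pos
    have hlb := b.length_pos
    have hn : (a*b).length = (a.length + b.length - 2) + 2 := by simp; omega
    rw [hn, T]
    simp only [Finset.mem_biUnion, Finset.mem_attach, Finset.mem_image, Finset.mem_product,
      true_and]
    refine ⟨⟨a.length - 1, ?_⟩, ⟨a, b⟩, ⟨?_, ?_⟩, rfl⟩
    · simp only [Finset.mem_range]; omega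
    · have : a.length - 1 + 1 = a.length := by omega
      rw [this]; exact iha
    · have : a.length + b.length - 2 + 1 - (a.length - 1) = b.length := by omega
      rw [this]; exact ihb

lemma mem_T_iff (n : ℕ) (s : FreeMagma Unit) : s ∈ T n ↔ s.length = n := by
  constructor
  · exact T_length n s
  · rintro rfl; exact mem_T_of_length s

lemma length_map {α β : Type*} (f : α → β) : ∀ s : FreeMagma α,
    (FreeMagma.map f s).length = s.length := by
  intro s
  induction s with
  | ih1 x => rfl
  | ih2 a b iha ihb => rw [map_mul]; simp [iha, ihb]

/-! ### Coefficient extraction and products -/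

variable {K X : Type*} [Field K]

local notation "A" => FreeMagmaAlgebra K X
local notation "E" => Module.End K (FreeMagmaAlgebra K X)

open scoped Classical

lemma coeff_mul_eq (t : WithOne (FreeMagma X))
    (P : Finset (WithOne (FreeMagma X) × WithOne (FreeMagma X)))
    (hP : ∀ u v : WithOne (FreeMagma X), u * v = t ↔ (u, v) ∈ P)
    (b d : A) :
    Finsupp.lapply (R := K) t (b * d).coeff
      = ∑ p ∈ P, Finsupp.lapply (R := K) p.1 b.coeff * Finsupp.lapply (R := K) p.2 d.coeff := by
  classical
  induction b using MonoidAlgebra.induction_linear with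
  | zero => simp
  | add f g hf hg => simp [add_mul, map_add, hf, hg, Finset.sum_add_distrib]
  | single m r =>
    induction d using MonoidAlgebra.induction_linear with
    | zero => simp
    | add f g hf hg => simp [mul_add, map_add, hf, hg, Finset.sum_add_distrib]
    | single m' r' =>
      rw [MonoidAlgebra.single_mul_single]
      simp only [Finsupp.lapply_apply, MonoidAlgebra.coeff_single, Finsupp.single_apply]
      have h2 : ∀ p ∈ P, ((if m = p.1 then r else 0) * if m' = p.2 then r' else 0)
          = if (m, m') = p then r * r' else 0 := by
        intro p _
        by_cases hA : m = p.1 <;> by_cases hB : m' = p.2 <;> simp [hA, hB, Prod.ext_iff]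
      rw [Finset.sum_congr rfl h2, Finset.sum_ite_eq P (m, m') fun _ => r * r']
      simp [hP m m']

def phi (t : WithOne (FreeMagma X)) : (A ⊗[K] A) →ₗ[K] A :=
  (TensorProduct.rid K A).toLinearMap ∘ₗ TensorProduct.map LinearMap.id
    (Finsupp.lapply t ∘ₗ (MonoidAlgebra.coeffLinearEquiv K).toLinearMap)

lemma phi_tmul (t : WithOne (FreeMagma X)) (a b : A) :
    phi t (a ⊗ₜ[K] b) = Finsupp.lapply (R := K) t b.coeff • a := by
  simp [phi, TensorProduct.rid_tmul]

lemma phi_mul (t : WithOne (FreeMagma X))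
    (P : Finset (WithOne (FreeMagma X) × WithOne (FreeMagma X)))
    (hP : ∀ u v : WithOne (FreeMagma X), u * v = t ↔ (u, v) ∈ P)
    (x y : A ⊗[K] A) :
    phi t (x * y) = ∑ p ∈ P, phi p.1 x * phi p.2 y := by
  classical
  induction x using TensorProduct.induction_on with
  | zero => simp
  | add u v hu hv => simp [add_mul, map_add, hu, hv, Finset.sum_add_distrib]
  | tmul a b =>
    induction y using TensorProduct.induction_on with
    | zero => simp
    | add u v hu hv => simp [mul_add, map_add, hu, hv, Finset.sum_add_distrib]
    | tmul c d =>
      rw [Algebra.TensorProduct.tmul_mul_tmul, phi_tmul, coeff_mul_eq t P hP, Finset.sum_smul]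
      refine Finset.sum_congr rfl fun p _ => ?_
      rw [phi_tmul, phi_tmul, smul_mul_assoc, mul_smul_comm, smul_smul]

/-! ### Solution sets for `u * v = t` in `WithOne (FreeMagma X)` -/

lemma solset_one (u v : WithOne (FreeMagma X)) :
    u * v = 1 ↔ (u, v) ∈ ({(1, 1)} : Finset (WithOne (FreeMagma X) × WithOne (FreeMagma X))) := by
  induction u using WithOne.cases_on <;> induction v using WithOne.cases_on <;>
    simp [← WithOne.coe_mul, Prod.ext_iff]

lemma solset_of (j : X) (u v : WithOne (FreeMagma X)) :
    u * v = ↑(FreeMagma.of j)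
      ↔ (u, v) ∈ ({(1, ↑(FreeMagma.of j)), (↑(FreeMagma.of j), 1)} :
          Finset (WithOne (FreeMagma X) × WithOne (FreeMagma X))) := by
  induction u using WithOne.cases_on <;> induction v using WithOne.cases_on <;>
    simp [← WithOne.coe_mul, Prod.ext_iff, mul_ne_of]

lemma solset_mul (a b : FreeMagma X) (u v : WithOne (FreeMagma X)) :
    u * v = ↑(a * b)
      ↔ (u, v) ∈ ({(1, ↑(a*b)), (↑(a*b), 1), (↑a, ↑b)} :
          Finset (WithOne (FreeMagma X) × WithOne (FreeMagma X))) := by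
  induction u using WithOne.cases_on <;> induction v using WithOne.cases_on <;>
    simp [← WithOne.coe_mul, Prod.ext_iff]


/-! ### `DeltaS` basics -/

variable (Δ : FreeMagmaAlgebra K X →ₗ[K] FreeMagmaAlgebra K X ⊗[K] FreeMagmaAlgebra K X)

lemma DeltaS_apply (t : WithOne (FreeMagma X)) (f : A) :
    DeltaS Δ t f = phi t (Δ f) := rfl

lemma DeltaS_mul (hmul : ∀ f g : A, Δ (f * g) = Δ f * Δ g)
    (t : WithOne (FreeMagma X))
    (P : Finset (WithOne (FreeMagma X) × WithOne (FreeMagma X)))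
    (hP : ∀ u v : WithOne (FreeMagma X), u * v = t ↔ (u, v) ∈ P)
    (f g : A) :
    DeltaS Δ t (f * g) = ∑ p ∈ P, DeltaS Δ p.1 f * DeltaS Δ p.2 g := by
  rw [DeltaS_apply, hmul, phi_mul t P hP]
  rfl

lemma DeltaS_one (hone : Δ 1 = (1 : A) ⊗ₜ[K] (1 : A)) (t : WithOne (FreeMagma X)) :
    DeltaS Δ t 1 = (if t = 1 then 1 else 0 : A) := by
  rw [DeltaS_apply, hone, phi_tmul]
  have : (1 : A) = MonoidAlgebra.single 1 1 := rfl
  rw [this, Finsupp.lapply_apply, MonoidAlgebra.coeff_single, Finsupp.single_apply]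
  by_cases h : t = 1 <;> simp [h, eq_comm]

lemma DeltaS_gen (hgen : ∀ x : X, Δ (FreeMagmaAlgebra.gen K x) =
      FreeMagmaAlgebra.gen K x ⊗ₜ[K] (1 : A) + (1 : A) ⊗ₜ[K] FreeMagmaAlgebra.gen K x)
    (j : X) (t : WithOne (FreeMagma X)) :
    DeltaS Δ t (FreeMagmaAlgebra.gen K j)
      = ((if t = 1 then FreeMagmaAlgebra.gen K j else 0)
        + (if t = ↑(FreeMagma.of j) then 1 else 0) : A) := by
  rw [DeltaS_apply, hgen j, map_add, phi_tmul, phi_tmul]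
  have h1 : (1 : A) = MonoidAlgebra.single 1 1 := rfl
  have h2 : FreeMagmaAlgebra.gen K j
      = MonoidAlgebra.single (↑(FreeMagma.of j) : WithOne (FreeMagma X)) (1 : K) := rfl
  rw [h1, h2, Finsupp.lapply_apply, Finsupp.lapply_apply, MonoidAlgebra.coeff_single,
    MonoidAlgebra.coeff_single, Finsupp.single_apply,
    Finsupp.single_apply]
  by_cases ha : t = 1 <;> by_cases hb : t = ↑(FreeMagma.of j) <;>
    simp [ha, hb, eq_comm, ← h2]

/-! ### The operator `L_n` -/

/-- `L_n = ∑ Δ_s` over monomials `s` of degree `n` in the variable `i` (with `L_0 = Δ_1`). -/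
def LM (i : X) : ℕ → Module.End K (FreeMagmaAlgebra K X)
  | 0 => DeltaS Δ 1
  | (k+1) => ∑ s ∈ T (k+1), DeltaS Δ ↑(FreeMagma.map (fun _ => i) s)

lemma LM_pos (i : X) (k : ℕ) :
    LM Δ i (k+1) = ∑ s ∈ T (k+1), DeltaS Δ ↑(FreeMagma.map (fun _ => i) s) := rfl

lemma LM_succ_succ (i : X) (n : ℕ) :
    LM Δ i (n+2) = ∑ p ∈ Finset.range (n+1), ∑ q ∈ T (p+1) ×ˢ T (n+1-p),
      DeltaS Δ ↑(FreeMagma.map (fun _ => i) q.1 * FreeMagma.map (fun _ => i) q.2) := by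
  rw [LM_pos]
  have hT : T (n+2) = (Finset.range (n+1)).attach.biUnion fun p =>
      Finset.image (fun q : FreeMagma Unit × FreeMagma Unit => q.1 * q.2)
        ((T (p.1+1)) ×ˢ (T (n+1-p.1))) := by rw [T]
  rw [hT]
  have hdisj : Set.PairwiseDisjoint ↑((Finset.range (n+1)).attach)
      (fun p : {x // x ∈ Finset.range (n+1)} =>
        Finset.image (fun q : FreeMagma Unit × FreeMagma Unit => q.1 * q.2)
          ((T (p.1+1)) ×ˢ (T (n+1-p.1)))) := by
    intro p _ p' _ hne
    apply Finset.disjoint_left.mpr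
    intro s hs hs'
    simp only [Finset.mem_image, Finset.mem_product] at hs hs'
    obtain ⟨⟨a, b⟩, ⟨ha, hb⟩, rfl⟩ := hs
    obtain ⟨⟨a', b'⟩, ⟨ha', hb'⟩, heq⟩ := hs'
    obtain ⟨h1, h2⟩ := (mul_inj a' b' a b).1 heq
    have l1 := T_length _ _ ha
    have l2 := T_length _ _ ha'
    have h3 : a'.length = a.length := by rw [h1]
    refine hne (Subtype.ext ?_)
    have : (p : ℕ) + 1 = (p' : ℕ) + 1 := by rw [← l1, ← l2, h3]
    omega
  rw [Finset.sum_biUnion hdisj, Finset.sum_attach (Finset.range (n+1))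
    (fun p => ∑ s ∈ Finset.image (fun q : FreeMagma Unit × FreeMagma Unit => q.1 * q.2)
        ((T (p+1)) ×ˢ (T (n+1-p))), DeltaS Δ ↑(FreeMagma.map (fun _ => i) s))]
  refine Finset.sum_congr rfl fun p _ => ?_
  rw [Finset.sum_image]
  · refine Finset.sum_congr rfl fun q _ => ?_
    rw [map_mul]
  · intro q hq q' hq' h
    obtain ⟨h1, h2⟩ := (mul_inj q.1 q.2 q'.1 q'.2).1 h
    exact Prod.ext h1 h2

lemma one_ne_coe_pair (c : FreeMagma X) (d : WithOne (FreeMagma X)) :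
    ((1 : WithOne (FreeMagma X)), d) ≠ ((c : WithOne (FreeMagma X)), (1 : WithOne (FreeMagma X))) := by
  intro h
  exact WithOne.coe_ne_one (Prod.ext_iff.1 h).1.symm

lemma LM_mul (hmul : ∀ f g : FreeMagmaAlgebra K X, Δ (f * g) = Δ f * Δ g) (i : X) :
    ∀ (n : ℕ) (f g : FreeMagmaAlgebra K X),
      LM Δ i n (f * g) = ∑ p ∈ Finset.range (n+1), LM Δ i p f * LM Δ i (n-p) g := by
  have hT1 : LM Δ i 1 = DeltaS Δ ↑(FreeMagma.of i) := by
    rw [LM_pos]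
    have : T 1 = {FreeMagma.of ()} := by rw [T]
    rw [this, Finset.sum_singleton]
    rfl
  intro n
  match n with
  | 0 =>
    intro f g
    show DeltaS Δ 1 (f * g) = _
    rw [DeltaS_mul Δ hmul 1 {(1,1)} solset_one, Finset.sum_singleton, Finset.sum_range_one]
    rfl
  | 1 =>
    intro f g
    rw [hT1, DeltaS_mul Δ hmul _ _ (solset_of i), Finset.sum_insert, Finset.sum_singleton,
      Finset.sum_range_succ, Finset.sum_range_one, hT1]
    · rfl
    · simp only [Finset.mem_singleton]
      exact one_ne_coe_pair _ _
  | (n+2) =>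
    intro f g
    have expand : ∀ h : FreeMagmaAlgebra K X,
        LM Δ i (n+2) h = ∑ p ∈ Finset.range (n+1), ∑ q ∈ T (p+1) ×ˢ T (n+1-p),
          DeltaS Δ ↑(FreeMagma.map (fun _ => i) q.1 * FreeMagma.map (fun _ => i) q.2) h := by
      intro h
      rw [LM_succ_succ]
      simp [LinearMap.sum_apply]
    rw [expand (f*g)]
    have step : ∀ p ∈ Finset.range (n+1), ∀ q ∈ T (p+1) ×ˢ T (n+1-p),
        DeltaS Δ ↑(FreeMagma.map (fun _ => i) q.1 * FreeMagma.map (fun _ => i) q.2) (f * g)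
          = DeltaS Δ 1 f *
              DeltaS Δ ↑(FreeMagma.map (fun _ => i) q.1 * FreeMagma.map (fun _ => i) q.2) g
            + DeltaS Δ ↑(FreeMagma.map (fun _ => i) q.1 * FreeMagma.map (fun _ => i) q.2) f *
              DeltaS Δ 1 g
            + DeltaS Δ ↑(FreeMagma.map (fun _ => i) q.1) f *
              DeltaS Δ ↑(FreeMagma.map (fun _ => i) q.2) g := by
      intro p _ q _
      rw [DeltaS_mul Δ hmul _ _ (solset_mul (FreeMagma.map (fun _ => i) q.1)
        (FreeMagma.map (fun _ => i) q.2))]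
      rw [Finset.sum_insert, Finset.sum_insert, Finset.sum_singleton]
      · rw [add_assoc]
      · simp [Prod.ext_iff]
      · simp only [Finset.mem_insert, Finset.mem_singleton, Prod.ext_iff, not_or]
        constructor
        · intro h
          exact WithOne.coe_ne_one h.1.symm
        · intro h
          exact WithOne.coe_ne_one h.1.symm
    rw [Finset.sum_congr rfl fun p hp => Finset.sum_congr rfl (step p hp)]
    simp only [Finset.sum_add_distrib]
    -- three pieces
    have piece1 : (∑ p ∈ Finset.range (n+1), ∑ q ∈ T (p+1) ×ˢ T (n+1-p),
        DeltaS Δ 1 f *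
          DeltaS Δ ↑(FreeMagma.map (fun _ => i) q.1 * FreeMagma.map (fun _ => i) q.2) g)
        = LM Δ i 0 f * LM Δ i (n+2) g := by
      rw [expand g]
      rw [Finset.mul_sum]
      refine Finset.sum_congr rfl fun p _ => ?_
      rw [Finset.mul_sum]
      rfl
    have piece2 : (∑ p ∈ Finset.range (n+1), ∑ q ∈ T (p+1) ×ˢ T (n+1-p),
        DeltaS Δ ↑(FreeMagma.map (fun _ => i) q.1 * FreeMagma.map (fun _ => i) q.2) f *
          DeltaS Δ 1 g)
        = LM Δ i (n+2) f * LM Δ i 0 g := by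
      rw [expand f, Finset.sum_mul]
      refine Finset.sum_congr rfl fun p _ => ?_
      rw [Finset.sum_mul]
      rfl
    have piece3 : ∀ p ∈ Finset.range (n+1), (∑ q ∈ T (p+1) ×ˢ T (n+1-p),
        DeltaS Δ ↑(FreeMagma.map (fun _ => i) q.1) f *
          DeltaS Δ ↑(FreeMagma.map (fun _ => i) q.2) g)
        = LM Δ i (p+1) f * LM Δ i (n+1-p) g := by
      intro p hp
      simp only [Finset.mem_range] at hp
      obtain ⟨m, hm⟩ : ∃ m, n+1-p = m+1 := ⟨n-p, by omega⟩
      rw [hm, LM_pos, LM_pos, LinearMap.sum_apply, LinearMap.sum_apply, Finset.sum_mul_sum,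
        ← hm, Finset.sum_product]
    rw [piece1, piece2, Finset.sum_congr rfl piece3]
    -- now the right-hand side
    rw [Finset.sum_range_succ' (fun p => LM Δ i p f * LM Δ i (n+2-p) g) (n+2)]
    rw [Finset.sum_range_succ (fun p => LM Δ i (p+1) f * LM Δ i (n+2-(p+1)) g) (n+1)]
    simp only [Nat.succ_sub_succ_eq_sub, Nat.add_sub_add_right, Nat.sub_self, Nat.sub_zero]
    abel

/-! ### The operator `R_n = (1/n!) Dⁿ` -/

variable (D : FreeMagmaAlgebra K X →ₗ[K] FreeMagmaAlgebra K X)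

/-- `R_n = (1/n!) Dⁿ`. -/
def RM (n : ℕ) : Module.End K (FreeMagmaAlgebra K X) :=
  (n.factorial : K)⁻¹ • ((D : Module.End K (FreeMagmaAlgebra K X))^n)

lemma RM_apply (n : ℕ) (f : FreeMagmaAlgebra K X) :
    RM D n f = (n.factorial : K)⁻¹ • (((D : Module.End K (FreeMagmaAlgebra K X))^n) f) := rfl

lemma fact_coeff [CharZero K] {p n : ℕ} (hp : p ≤ n) :
    (n.factorial : K)⁻¹ * (n.choose p : K)
      = (p.factorial : K)⁻¹ * ((n-p).factorial : K)⁻¹ := by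
  have key : (n.choose p : K) * (p.factorial : K) * ((n-p).factorial : K) = (n.factorial : K) := by
    exact_mod_cast congrArg (Nat.cast : ℕ → K) (Nat.choose_mul_factorial_mul_factorial hp)
  have h1 : (p.factorial : K) ≠ 0 := Nat.cast_ne_zero.2 (Nat.factorial_ne_zero p)
  have h2 : ((n-p).factorial : K) ≠ 0 := Nat.cast_ne_zero.2 (Nat.factorial_ne_zero _)
  have h3 : (n.factorial : K) ≠ 0 := Nat.cast_ne_zero.2 (Nat.factorial_ne_zero n)
  field_simp
  linear_combination key

lemma pow_leibniz (hD : ∀ f g : FreeMagmaAlgebra K X, D (f*g) = D f * g + f * D g) :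
    ∀ (n : ℕ) (f g : FreeMagmaAlgebra K X),
      ((D : Module.End K (FreeMagmaAlgebra K X))^n) (f*g)
        = ∑ p ∈ Finset.range (n+1), n.choose p •
            (((D : Module.End K (FreeMagmaAlgebra K X))^p) f *
              ((D : Module.End K (FreeMagmaAlgebra K X))^(n-p)) g) := by
  set E' : Type _ := Module.End K (FreeMagmaAlgebra K X) with hE'
  intro n
  induction n with
  | zero => intro f g; simp
  | succ n ih =>
    intro f g
    have h1 : ((D : E')^(n+1)) (f*g) = D (((D : E')^n) (f*g)) := by
      rw [pow_succ']
      rfl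
    rw [h1, ih, map_sum]
    have h2 : ∀ p ∈ Finset.range (n+1),
        D (n.choose p • (((D : E')^p) f * ((D : E')^(n-p)) g))
          = n.choose p • (((D : E')^(p+1)) f * ((D : E')^(n-p)) g)
            + n.choose p • (((D : E')^p) f * ((D : E')^(n-p+1)) g) := by
      intro p _
      rw [map_nsmul, hD, smul_add]
      have e1 : D (((D : E')^p) f) = ((D : E')^(p+1)) f := by rw [pow_succ']; rfl
      have e2 : D (((D : E')^(n-p)) g) = ((D : E')^(n-p+1)) g := by rw [pow_succ']; rfl
      rw [e1, e2]
    rw [Finset.sum_congr rfl h2, Finset.sum_add_distrib]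
    rw [Finset.sum_range_succ' (fun p => n.choose p • (((D : E')^p) f * ((D : E')^(n-p+1)) g)) n]
    have h3 : ∀ p ∈ Finset.range n,
        n.choose (p+1) • (((D : E')^(p+1)) f * ((D : E')^(n-(p+1)+1)) g)
          = n.choose (p+1) • (((D : E')^(p+1)) f * ((D : E')^(n-p)) g) := by
      intro p hp
      simp only [Finset.mem_range] at hp
      have e : n - (p+1) + 1 = n - p := by omega
      rw [e]
    rw [Finset.sum_congr rfl h3]
    rw [Finset.sum_range_succ'
      (fun p => (n+1).choose p • (((D : E')^p) f * ((D : E')^(n+1-p)) g)) (n+1)]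
    have h4 : ∀ p ∈ Finset.range (n+1),
        (n+1).choose (p+1) • (((D : E')^(p+1)) f * ((D : E')^(n+1-(p+1))) g)
          = n.choose p • (((D : E')^(p+1)) f * ((D : E')^(n-p)) g)
            + n.choose (p+1) • (((D : E')^(p+1)) f * ((D : E')^(n-p)) g) := by
      intro p _
      have e : n+1-(p+1) = n-p := by omega
      rw [e, Nat.choose_succ_succ, add_nsmul]
    rw [Finset.sum_congr rfl h4, Finset.sum_add_distrib]
    rw [Finset.sum_range_succ
      (fun p => n.choose (p+1) • (((D : E')^(p+1)) f * ((D : E')^(n-p)) g)) n]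
    simp only [Nat.choose_succ_self, zero_nsmul, add_zero, Nat.choose_zero_right, one_nsmul,
      Nat.sub_zero, pow_zero, Nat.choose_self]
    abel

lemma RM_mul [CharZero K] (hD : ∀ f g : FreeMagmaAlgebra K X, D (f*g) = D f * g + f * D g)
    (n : ℕ) (f g : FreeMagmaAlgebra K X) :
    RM D n (f * g) = ∑ p ∈ Finset.range (n+1), RM D p f * RM D (n-p) g := by
  rw [RM_apply, pow_leibniz D hD n f g, Finset.smul_sum]
  refine Finset.sum_congr rfl fun p hp => ?_
  simp only [Finset.mem_range] at hp
  rw [RM_apply, RM_apply, smul_mul_assoc, mul_smul_comm, smul_smul,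
    ← Nat.cast_smul_eq_nsmul K, smul_smul, fact_coeff (by omega : p ≤ n)]

/-! ### Values on `1` and on generators -/

lemma LM_one_eq (i : X) : LM Δ i 1 = DeltaS Δ ↑(FreeMagma.of i) := by
  rw [LM_pos]
  have : T 1 = {FreeMagma.of ()} := by rw [T]
  rw [this, Finset.sum_singleton]
  rfl

lemma LM_one_zero (hone : Δ 1 = (1 : FreeMagmaAlgebra K X) ⊗ₜ[K] (1 : FreeMagmaAlgebra K X))
    (i : X) : LM Δ i 0 (1 : FreeMagmaAlgebra K X) = 1 := by
  show DeltaS Δ 1 (1 : FreeMagmaAlgebra K X) = 1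
  rw [DeltaS_one Δ hone]
  simp

lemma LM_one_pos (hone : Δ 1 = (1 : FreeMagmaAlgebra K X) ⊗ₜ[K] (1 : FreeMagmaAlgebra K X))
    (i : X) (k : ℕ) : LM Δ i (k+1) (1 : FreeMagmaAlgebra K X) = 0 := by
  rw [LM_pos, LinearMap.sum_apply]
  refine Finset.sum_eq_zero fun s _ => ?_
  rw [DeltaS_one Δ hone]
  simp [WithOne.coe_ne_one]

lemma LM_gen_zero (hgen : ∀ x : X, Δ (FreeMagmaAlgebra.gen K x) =
      FreeMagmaAlgebra.gen K x ⊗ₜ[K] (1 : FreeMagmaAlgebra K X)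
        + (1 : FreeMagmaAlgebra K X) ⊗ₜ[K] FreeMagmaAlgebra.gen K x)
    (i j : X) : LM Δ i 0 (FreeMagmaAlgebra.gen K j) = FreeMagmaAlgebra.gen K j := by
  show DeltaS Δ 1 (FreeMagmaAlgebra.gen K j) = _
  rw [DeltaS_gen Δ hgen]
  simp [WithOne.one_ne_coe]

lemma LM_gen_one (hgen : ∀ x : X, Δ (FreeMagmaAlgebra.gen K x) =
      FreeMagmaAlgebra.gen K x ⊗ₜ[K] (1 : FreeMagmaAlgebra K X)
        + (1 : FreeMagmaAlgebra K X) ⊗ₜ[K] FreeMagmaAlgebra.gen K x)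
    (i j : X) : LM Δ i 1 (FreeMagmaAlgebra.gen K j)
      = (if j = i then 1 else 0 : FreeMagmaAlgebra K X) := by
  rw [LM_one_eq, DeltaS_gen Δ hgen]
  rw [if_neg WithOne.coe_ne_one]
  by_cases h : j = i
  · subst h; simp
  · rw [if_neg, if_neg h]
    · simp
    · simp only [WithOne.coe_inj]
      intro hh
      injection hh with hx
      exact h hx.symm

lemma LM_gen_big (hgen : ∀ x : X, Δ (FreeMagmaAlgebra.gen K x) =
      FreeMagmaAlgebra.gen K x ⊗ₜ[K] (1 : FreeMagmaAlgebra K X)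
        + (1 : FreeMagmaAlgebra K X) ⊗ₜ[K] FreeMagmaAlgebra.gen K x)
    (i j : X) (k : ℕ) : LM Δ i (k+2) (FreeMagmaAlgebra.gen K j) = 0 := by
  rw [LM_pos, LinearMap.sum_apply]
  refine Finset.sum_eq_zero fun s hs => ?_
  rw [DeltaS_gen Δ hgen]
  have hne : (FreeMagma.map (fun _ => i) s) ≠ FreeMagma.of j := by
    intro h
    have hl := congrArg FreeMagma.length h
    rw [length_map, T_length _ _ hs] at hl
    simp [FreeMagma.length] at hl
  rw [if_neg WithOne.coe_ne_one, if_neg]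
  · simp
  · simpa [WithOne.coe_inj] using hne

lemma D_one_eq (hD : ∀ f g : FreeMagmaAlgebra K X, D (f*g) = D f * g + f * D g) :
    D (1 : FreeMagmaAlgebra K X) = 0 := by
  have h := hD 1 1
  simp only [one_mul, mul_one] at h
  have h2 : D (1 : FreeMagmaAlgebra K X) + 0 = D 1 + D 1 := by rw [add_zero]; exact h
  exact (add_left_cancel h2).symm

lemma Dpow_one (hD : ∀ f g : FreeMagmaAlgebra K X, D (f*g) = D f * g + f * D g) (k : ℕ) :
    ((D : Module.End K (FreeMagmaAlgebra K X))^(k+1)) (1 : FreeMagmaAlgebra K X) = 0 := by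
  rw [pow_succ, Module.End.mul_apply, D_one_eq D hD, map_zero]

lemma Dpow_gen_big (i : X)
    (hD : ∀ f g : FreeMagmaAlgebra K X, D (f*g) = D f * g + f * D g)
    (hDi : D (FreeMagmaAlgebra.gen K i) = 1)
    (hDj : ∀ j : X, j ≠ i → D (FreeMagmaAlgebra.gen K j) = 0)
    (j : X) (k : ℕ) :
    ((D : Module.End K (FreeMagmaAlgebra K X))^(k+2)) (FreeMagmaAlgebra.gen K j) = 0 := by
  rw [pow_succ, Module.End.mul_apply]
  by_cases h : j = i
  · subst h
    rw [hDi, Dpow_one D hD]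
  · rw [hDj j h, map_zero]

/-! ### The main induction -/

lemma main_single [CharZero K]
    (hmul : ∀ f g : FreeMagmaAlgebra K X, Δ (f * g) = Δ f * Δ g)
    (hone : Δ 1 = (1 : FreeMagmaAlgebra K X) ⊗ₜ[K] (1 : FreeMagmaAlgebra K X))
    (hgen : ∀ x : X, Δ (FreeMagmaAlgebra.gen K x) =
      FreeMagmaAlgebra.gen K x ⊗ₜ[K] (1 : FreeMagmaAlgebra K X)
        + (1 : FreeMagmaAlgebra K X) ⊗ₜ[K] FreeMagmaAlgebra.gen K x)
    (i : X)
    (hD : ∀ f g : FreeMagmaAlgebra K X, D (f*g) = D f * g + f * D g)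
    (hDi : D (FreeMagmaAlgebra.gen K i) = 1)
    (hDj : ∀ j : X, j ≠ i → D (FreeMagmaAlgebra.gen K j) = 0)
    (m : WithOne (FreeMagma X)) (n : ℕ) :
    LM Δ i n (MonoidAlgebra.single m 1) = RM D n (MonoidAlgebra.single m 1) := by
  have hgenj : ∀ j : X, FreeMagmaAlgebra.gen K j
      = MonoidAlgebra.single (↑(FreeMagma.of j) : WithOne (FreeMagma X)) (1:K) := fun _ => rfl
  have hone' : (MonoidAlgebra.single (1 : WithOne (FreeMagma X)) (1:K))
      = (1 : FreeMagmaAlgebra K X) := rfl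
  have hcoe : ∀ a : FreeMagma X, ∀ n : ℕ,
      LM Δ i n (MonoidAlgebra.single (↑a : WithOne (FreeMagma X)) (1:K))
        = RM D n (MonoidAlgebra.single (↑a : WithOne (FreeMagma X)) (1:K)) := by
    intro a
    induction a with
    | ih1 x =>
      intro n
      rw [← hgenj x]
      match n with
      | 0 =>
        rw [LM_gen_zero Δ hgen i x, RM_apply]
        simp
      | 1 =>
        rw [LM_gen_one Δ hgen i x, RM_apply]
        by_cases h : x = i
        · subst h
          simp [hDi]
        · rw [if_neg h]
          simp only [pow_one]
          rw [hDj x h]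
          simp
      | (k+2) =>
        rw [LM_gen_big Δ hgen i x k, RM_apply, Dpow_gen_big D i hD hDi hDj x k, smul_zero]
    | ih2 a b iha ihb =>
      intro n
      have hsplit : (MonoidAlgebra.single (↑(a*b) : WithOne (FreeMagma X)) (1:K))
          = MonoidAlgebra.single (↑a : WithOne (FreeMagma X)) (1:K)
            * MonoidAlgebra.single (↑b : WithOne (FreeMagma X)) (1:K) := by
        rw [MonoidAlgebra.single_mul_single, one_mul]
        rfl
      rw [hsplit, LM_mul Δ hmul i n, RM_mul D hD n]
      exact Finset.sum_congr rfl fun p _ => by rw [iha p, ihb (n-p)]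
  refine WithOne.cases_on m ?_ (fun a => hcoe a n)
  rw [hone']
  match n with
  | 0 =>
    rw [LM_one_zero Δ hone i, RM_apply]
    simp
  | (k+1) =>
    rw [LM_one_pos Δ hone i k, RM_apply, Dpow_one D hD, smul_zero]

lemma LM_eq_RM [CharZero K]
    (hmul : ∀ f g : FreeMagmaAlgebra K X, Δ (f * g) = Δ f * Δ g)
    (hone : Δ 1 = (1 : FreeMagmaAlgebra K X) ⊗ₜ[K] (1 : FreeMagmaAlgebra K X))
    (hgen : ∀ x : X, Δ (FreeMagmaAlgebra.gen K x) =
      FreeMagmaAlgebra.gen K x ⊗ₜ[K] (1 : FreeMagmaAlgebra K X)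
        + (1 : FreeMagmaAlgebra K X) ⊗ₜ[K] FreeMagmaAlgebra.gen K x)
    (i : X)
    (hD : ∀ f g : FreeMagmaAlgebra K X, D (f*g) = D f * g + f * D g)
    (hDi : D (FreeMagmaAlgebra.gen K i) = 1)
    (hDj : ∀ j : X, j ≠ i → D (FreeMagmaAlgebra.gen K j) = 0)
    (n : ℕ) (f : FreeMagmaAlgebra K X) :
    LM Δ i n f = RM D n f := by
  induction f using MonoidAlgebra.induction_linear with
  | zero => rw [map_zero, map_zero]
  | add f g hf hg => rw [map_add, map_add, hf, hg]
  | single m c =>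
    have h : (MonoidAlgebra.single m c : FreeMagmaAlgebra K X)
        = c • (MonoidAlgebra.single m (1:K)) := by
      have h0 := MonoidAlgebra.smul_single' (R := K) (M := WithOne (FreeMagma X)) c m 1
      rw [mul_one] at h0
      exact h0.symm
    rw [h, map_smul, map_smul]
    exact congrArg (fun z => c • z) (main_single Δ D hmul hone hgen i hD hDi hDj m n)

end Aux12

/-- The sum of `Δ_s` over all monomials `s` of degree `n` in the single
variable `x_i` equals `(1/n!)·D_i^n`, where `D_i` is the derivation with `D_i(x_i) = 1`,
`D_i(x_j) = 0` for `j ≠ i`. -/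
theorem sum_DeltaS_eq_pow_derivation (K X : Type*) [Field K] [CharZero K]
    (Δ : FreeMagmaAlgebra K X →ₗ[K] FreeMagmaAlgebra K X ⊗[K] FreeMagmaAlgebra K X)
    (hmul : ∀ f g : FreeMagmaAlgebra K X, Δ (f * g) = Δ f * Δ g)
    (hone : Δ 1 = 1 ⊗ₜ 1)
    (hgen : ∀ x : X, Δ (FreeMagmaAlgebra.gen K x) =
      FreeMagmaAlgebra.gen K x ⊗ₜ 1 + 1 ⊗ₜ FreeMagmaAlgebra.gen K x)
    (i : X)
    (D : FreeMagmaAlgebra K X →ₗ[K] FreeMagmaAlgebra K X)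
    (hD : ∀ f g : FreeMagmaAlgebra K X, D (f * g) = D f * g + f * D g)
    (hDi : D (FreeMagmaAlgebra.gen K i) = 1)
    (hDj : ∀ j : X, j ≠ i → D (FreeMagmaAlgebra.gen K j) = 0)
    (n : ℕ) (hn : 1 ≤ n) :
    ∀ f : FreeMagmaAlgebra K X,
      (∑ᶠ s ∈ {s : FreeMagma Unit | s.length = n},
          DeltaS Δ ((FreeMagma.map (fun _ => i) s : FreeMagma X) : WithOne (FreeMagma X)) f)
        = ((n.factorial : K))⁻¹ • (((D : Module.End K (FreeMagmaAlgebra K X)) ^ n) f) := by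
  intro f
  obtain ⟨k, rfl⟩ : ∃ k, n = k+1 := ⟨n-1, by omega⟩
  have hset : {s : FreeMagma Unit | s.length = k+1} = ↑(Aux12.T (k+1)) := by
    ext s
    simp [Aux12.mem_T_iff]
  rw [hset, finsum_mem_coe_finset]
  have h1 : (∑ s ∈ Aux12.T (k+1),
      DeltaS Δ ((FreeMagma.map (fun _ => i) s : FreeMagma X) : WithOne (FreeMagma X)) f)
      = Aux12.LM Δ i (k+1) f := by
    rw [Aux12.LM_pos, LinearMap.sum_apply]
  rw [h1, Aux12.LM_eq_RM Δ D hmul hone hgen i hD hDi hDj (k+1) f, Aux12.RM_apply]
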